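/- There exists a Følner sequence (F_n) in ℤ and a sequence (u_m)_{m∈ℤ} of complex numbers such that: lim_n (1/|F_n|) ∑_{m∈F_n} |u_m|² = 1/2, lim_n (1/|F_n|) ∑_{m∈F_n} u_m = 1/2, and for every h ∈ ℤ, h ≠ 0, lim_n (1/|F_n|) ∑_{m∈F_n} u_{m+h} conj(u_m) = 0. Concretely, one may take F_n = [n³, n³ + 2n] ∩ ℤ and u defined by u_m = 1 for m ∈ [n³, n³+n], and u_m = −n for m ∈ [n³+n+1, n³+2n] (values elsewhere irrelevant as n ranges over ℕ with disjoint blocks). -/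

import Mathlib

open Filter
open scoped symmDiff


namespace VdCCex
open Finset

/-- Block left endpoint. -/
def Ab (k : ℕ) : ℤ := (k : ℤ)^4
/-- Block right endpoint. -/
def Bb (k : ℕ) : ℤ := (k : ℤ)^4 + 8*(k:ℤ)^2 - 1

/-- local profile of the deviation of `u` from `1/2` around block `k`. -/
noncomputable def prof (k : ℕ) (m : ℤ) : ℝ :=
  if Ab k - k ≤ m ∧ m ≤ Bb k + k then
    (if m = Ab k ∨ m = Bb k then (k : ℝ)
     else if Ab k ≤ m ∧ m ≤ Bb k then 0 else -2*(k:ℝ))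
  else 0

noncomputable def w (m : ℤ) : ℝ := 1/2 + ∑ j ∈ Finset.Icc 2 m.toNat, prof j m

lemma prof_eq_zero {k : ℕ} {m : ℤ} (h : m < Ab k - k ∨ Bb k + k < m) :
    prof k m = 0 := by
  unfold prof
  rw [if_neg]
  rcases h with h | h <;> omega

lemma gap {j k : ℕ} (hj : 2 ≤ j) (hjk : j < k) : Bb j + j < Ab k - k := by
  have h1 : (2:ℤ) ≤ (j:ℤ) := by exact_mod_cast hj
  have h2 : (j:ℤ) + 1 ≤ (k:ℤ) := by exact_mod_cast hjk
  set x : ℤ := (j:ℤ) + 1 with hx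
  set y : ℤ := (k:ℤ) with hy
  have hx1 : (1:ℤ) ≤ x := by omega
  have hxy : x ≤ y := h2
  have e1 : 0 ≤ (y - 1) * y^2 := mul_nonneg (by omega) (sq_nonneg y)
  have e2 : 0 ≤ (y - 1) * y := mul_nonneg (by omega) (by omega)
  have e3 : 0 ≤ (x - 1) * x^2 := mul_nonneg (by omega) (sq_nonneg x)
  have e4 : 0 ≤ (x - 1) * x := mul_nonneg (by omega) (by omega)
  have e5 : 0 ≤ y^2 * x := mul_nonneg (sq_nonneg y) (by omega)
  have e6 : 0 ≤ y * x^2 := mul_nonneg (by omega) (sq_nonneg x)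
  have inner : (0:ℤ) ≤ y^3 + y^2*x + y*x^2 + x^3 - 1 := by nlinarith
  have key : (0:ℤ) ≤ (y - x) * (y^3 + y^2*x + y*x^2 + x^3 - 1) :=
    mul_nonneg (by omega) inner
  have hmono : x^4 - x ≤ y^4 - y := by nlinarith [key]
  have hstep : Bb j + j < x^4 - x := by
    simp only [Bb, hx]; nlinarith
  simp only [Ab, ← hy]
  linarith

lemma w_eq {k : ℕ} (hk : 2 ≤ k) {m : ℤ} (h1 : Ab k - k ≤ m) (h2 : m ≤ Bb k + k) :
    w m = 1/2 + prof k m := by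
  unfold w
  congr 1
  have hk2 : (2:ℤ) ≤ (k:ℤ) := by exact_mod_cast hk
  have hkm : (k:ℤ) ≤ m := by
    unfold Ab at h1
    nlinarith [sq_nonneg ((k:ℤ)^2 - (k:ℤ)), sq_nonneg ((k:ℤ) - 2), sq_nonneg (k:ℤ)]
  have hm0 : (0:ℤ) ≤ m := by omega
  apply Finset.sum_eq_single_of_mem
  · simp only [Finset.mem_Icc]
    exact ⟨hk, (Int.le_toNat hm0).2 hkm⟩
  · intro j hj hne
    simp only [Finset.mem_Icc] at hj
    apply prof_eq_zero
    rcases lt_or_gt_of_ne hne with hlt | hgt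
    · right; have := gap hj.1 hlt; omega
    · left; have := gap hk hgt; omega

lemma kfacts (k : ℕ) (hk : 2 ≤ k) :
    (2:ℤ) ≤ (k:ℤ) ∧ (2:ℤ)*(k:ℤ) ≤ (k:ℤ)^2 ∧ Bb k = Ab k + 8*(k:ℤ)^2 - 1 := by
  have h1 : (2:ℤ) ≤ (k:ℤ) := by exact_mod_cast hk
  refine ⟨h1, by nlinarith, rfl⟩

lemma w_spikeA {k : ℕ} (hk : 2 ≤ k) : w (Ab k) = 1/2 + k := by
  obtain ⟨h1, h2, h3⟩ := kfacts k hk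
  rw [w_eq hk (by omega) (by omega)]
  unfold prof
  rw [if_pos (by omega), if_pos (Or.inl rfl)]

lemma w_spikeB {k : ℕ} (hk : 2 ≤ k) : w (Bb k) = 1/2 + k := by
  obtain ⟨h1, h2, h3⟩ := kfacts k hk
  rw [w_eq hk (by omega) (by omega)]
  unfold prof
  rw [if_pos (by omega), if_pos (Or.inr rfl)]

lemma w_mid {k : ℕ} (hk : 2 ≤ k) {m : ℤ} (hm1 : Ab k < m) (hm2 : m < Bb k) :
    w m = 1/2 := by
  obtain ⟨h1, h2, h3⟩ := kfacts k hk
  rw [w_eq hk (by omega) (by omega)]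
  unfold prof
  rw [if_pos (by omega), if_neg (by omega), if_pos (by omega)]
  ring

lemma w_left {k : ℕ} (hk : 2 ≤ k) {m : ℤ} (hm1 : Ab k - k ≤ m) (hm2 : m < Ab k) :
    w m = 1/2 - 2*k := by
  obtain ⟨h1, h2, h3⟩ := kfacts k hk
  rw [w_eq hk (by omega) (by omega)]
  unfold prof
  rw [if_pos (by omega), if_neg (by omega), if_neg (by omega)]
  ring

lemma w_right {k : ℕ} (hk : 2 ≤ k) {m : ℤ} (hm1 : Bb k < m) (hm2 : m ≤ Bb k + k) :
    w m = 1/2 - 2*k := by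
  obtain ⟨h1, h2, h3⟩ := kfacts k hk
  rw [w_eq hk (by omega) (by omega)]
  unfold prof
  rw [if_pos (by omega), if_neg (by omega), if_neg (by omega)]
  ring

lemma sum_Ioc_const (f : ℤ → ℝ) (a b : ℤ) (c : ℝ)
    (h : ∀ m, a < m → m ≤ b → f m = c) :
    ∑ m ∈ Finset.Ioc a b, f m = ((b - a).toNat : ℝ) * c := by
  rw [Finset.sum_congr rfl (fun m hm => h m (Finset.mem_Ioc.1 hm).1 (Finset.mem_Ioc.1 hm).2),
    Finset.sum_const, Int.card_Ioc, nsmul_eq_mul]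

lemma Icc_eq_Ioc (a b : ℤ) : Finset.Icc a b = Finset.Ioc (a-1) b := by
  ext x; simp only [Finset.mem_Icc, Finset.mem_Ioc]; omega

lemma toNat_cast {x : ℤ} (h : 0 ≤ x) : ((x.toNat : ℕ) : ℝ) = (x : ℝ) := by
  rw [← Int.cast_natCast (R := ℝ), Int.toNat_of_nonneg h]

end VdCCex
namespace VdCCex
open Finset

lemma sum_Ioc_split (f : ℤ → ℝ) {a b c : ℤ} (h1 : a ≤ b) (h2 : b ≤ c) :
    ∑ m ∈ Finset.Ioc a c, f m = ∑ m ∈ Finset.Ioc a b, f m + ∑ m ∈ Finset.Ioc b c, f m := by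
  rw [← Finset.Ioc_union_Ioc_eq_Ioc h1 h2, Finset.sum_union]
  rw [Finset.disjoint_left]
  intro x hx hx'
  simp only [Finset.mem_Ioc] at hx hx'
  omega

lemma sum_w{k : ℕ} (hk : 2 ≤ k) :
    ∑ m ∈ Finset.Icc (Ab k) (Bb k), w m = 4*(k:ℝ)^2 + 2*k := by
  obtain ⟨h1, h2, h3⟩ := kfacts k hk
  rw [Icc_eq_Ioc]
  rw [sum_Ioc_split w (show Ab k - 1 ≤ Ab k by omega) (show Ab k ≤ Bb k by omega)]
  rw [sum_Ioc_split w (show Ab k ≤ Bb k - 1 by omega) (show Bb k - 1 ≤ Bb k by omega)]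
  rw [sum_Ioc_const w (Ab k - 1) (Ab k) (1/2 + k)
      (fun m hm1 hm2 => by rw [show m = Ab k by omega]; exact w_spikeA hk),
    sum_Ioc_const w (Ab k) (Bb k - 1) (1/2)
      (fun m hm1 hm2 => w_mid hk (by omega) (by omega)),
    sum_Ioc_const w (Bb k - 1) (Bb k) (1/2 + k)
      (fun m hm1 hm2 => by rw [show m = Bb k by omega]; exact w_spikeB hk)]
  rw [show Ab k - (Ab k - 1) = 1 by omega,
    show Bb k - 1 - Ab k = 8*(k:ℤ)^2 - 2 by omega,
    show Bb k - (Bb k - 1) = 1 by omega,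
    toNat_cast (by omega : (0:ℤ) ≤ 8*(k:ℤ)^2 - 2)]
  push_cast
  ring

lemma sum_w_sq {k : ℕ} (hk : 2 ≤ k) :
    ∑ m ∈ Finset.Icc (Ab k) (Bb k), (w m)^2 = 4*(k:ℝ)^2 + 2*k := by
  obtain ⟨h1, h2, h3⟩ := kfacts k hk
  rw [Icc_eq_Ioc]
  rw [sum_Ioc_split (fun m => (w m)^2) (show Ab k - 1 ≤ Ab k by omega) (show Ab k ≤ Bb k by omega)]
  rw [sum_Ioc_split (fun m => (w m)^2) (show Ab k ≤ Bb k - 1 by omega) (show Bb k - 1 ≤ Bb k by omega)]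
  rw [sum_Ioc_const (fun m => (w m)^2) (Ab k - 1) (Ab k) ((1/2 + (k:ℝ))^2)
      (fun m hm1 hm2 => by
        rw [show w m = 1/2 + (k:ℝ) from by rw [show m = Ab k by omega]; exact w_spikeA hk]),
    sum_Ioc_const (fun m => (w m)^2) (Ab k) (Bb k - 1) ((1/2 : ℝ)^2)
      (fun m hm1 hm2 => by
        rw [show w m = 1/2 from w_mid hk (by omega) (by omega)]),
    sum_Ioc_const (fun m => (w m)^2) (Bb k - 1) (Bb k) ((1/2 + (k:ℝ))^2)
      (fun m hm1 hm2 => by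
        rw [show w m = 1/2 + (k:ℝ) from by rw [show m = Bb k by omega]; exact w_spikeB hk])]
  rw [show Ab k - (Ab k - 1) = 1 by omega,
    show Bb k - 1 - Ab k = 8*(k:ℤ)^2 - 2 by omega,
    show Bb k - (Bb k - 1) = 1 by omega,
    toNat_cast (by omega : (0:ℤ) ≤ 8*(k:ℤ)^2 - 2)]
  push_cast
  ring

lemma sum_corr_pos {k : ℕ} (hk : 2 ≤ k) {h : ℤ} (hh1 : 1 ≤ h) (hh2 : h ≤ k) :
    ∑ m ∈ Finset.Icc (Ab k) (Bb k), w (m + h) * w m = (3/2 - (h:ℝ)) * k := by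
  obtain ⟨h1, h2, h3⟩ := kfacts k hk
  set f : ℤ → ℝ := fun m => w (m + h) * w m with hf
  rw [Icc_eq_Ioc]
  rw [sum_Ioc_split f (show Ab k - 1 ≤ Ab k by omega) (show Ab k ≤ Bb k by omega)]
  rw [sum_Ioc_split f (show Ab k ≤ Bb k - h - 1 by omega) (show Bb k - h - 1 ≤ Bb k by omega)]
  rw [sum_Ioc_split f (show Bb k - h - 1 ≤ Bb k - h by omega) (show Bb k - h ≤ Bb k by omega)]
  rw [sum_Ioc_split f (show Bb k - h ≤ Bb k - 1 by omega) (show Bb k - 1 ≤ Bb k by omega)]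
  rw [sum_Ioc_const f (Ab k - 1) (Ab k) ((1/2) * (1/2 + (k:ℝ)))
      (fun m hm1 hm2 => by
        simp only [hf]
        have hm : m = Ab k := by omega
        subst hm
        rw [w_spikeA hk, show w (Ab k + h) = 1/2 from w_mid hk (by omega) (by omega)]),
    sum_Ioc_const f (Ab k) (Bb k - h - 1) ((1/2) * (1/2 : ℝ))
      (fun m hm1 hm2 => by
        simp only [hf]
        rw [show w m = 1/2 from w_mid hk (by omega) (by omega),
          show w (m + h) = 1/2 from w_mid hk (by omega) (by omega)]),
    sum_Ioc_const f (Bb k - h - 1) (Bb k - h) ((1/2 + (k:ℝ)) * (1/2))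
      (fun m hm1 hm2 => by
        simp only [hf]
        have hm : m = Bb k - h := by omega
        subst hm
        rw [show Bb k - h + h = Bb k by ring, w_spikeB hk,
          show w (Bb k - h) = 1/2 from w_mid hk (by omega) (by omega)]),
    sum_Ioc_const f (Bb k - h) (Bb k - 1) ((1/2 - 2*(k:ℝ)) * (1/2))
      (fun m hm1 hm2 => by
        simp only [hf]
        rw [show w m = 1/2 from w_mid hk (by omega) (by omega),
          show w (m + h) = 1/2 - 2*(k:ℝ) from w_right hk (by omega) (by omega)]),
    sum_Ioc_const f (Bb k - 1) (Bb k) ((1/2 - 2*(k:ℝ)) * (1/2 + (k:ℝ)))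
      (fun m hm1 hm2 => by
        simp only [hf]
        have hm : m = Bb k := by omega
        subst hm
        rw [w_spikeB hk, show w (Bb k + h) = 1/2 - 2*(k:ℝ) from w_right hk (by omega) (by omega)])]
  rw [show Ab k - (Ab k - 1) = 1 by omega,
    show Bb k - h - 1 - Ab k = 8*(k:ℤ)^2 - 2 - h by omega,
    show Bb k - h - (Bb k - h - 1) = 1 by omega,
    show Bb k - 1 - (Bb k - h) = h - 1 by omega,
    show Bb k - (Bb k - 1) = 1 by omega,
    toNat_cast (by omega : (0:ℤ) ≤ 8*(k:ℤ)^2 - 2 - h),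
    toNat_cast (by omega : (0:ℤ) ≤ h - 1)]
  push_cast
  ring

lemma sum_corr_neg {k : ℕ} (hk : 2 ≤ k) {h : ℤ} (hh1 : h ≤ -1) (hh2 : -(k:ℤ) ≤ h) :
    ∑ m ∈ Finset.Icc (Ab k) (Bb k), w (m + h) * w m = (3/2 + (h:ℝ)) * k := by
  obtain ⟨h1, h2, h3⟩ := kfacts k hk
  set f : ℤ → ℝ := fun m => w (m + h) * w m with hf
  rw [Icc_eq_Ioc]
  rw [sum_Ioc_split f (show Ab k - 1 ≤ Ab k by omega) (show Ab k ≤ Bb k by omega)]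
  rw [sum_Ioc_split f (show Ab k ≤ Ab k - h - 1 by omega) (show Ab k - h - 1 ≤ Bb k by omega)]
  rw [sum_Ioc_split f (show Ab k - h - 1 ≤ Ab k - h by omega) (show Ab k - h ≤ Bb k by omega)]
  rw [sum_Ioc_split f (show Ab k - h ≤ Bb k - 1 by omega) (show Bb k - 1 ≤ Bb k by omega)]
  rw [sum_Ioc_const f (Ab k - 1) (Ab k) ((1/2 - 2*(k:ℝ)) * (1/2 + (k:ℝ)))
      (fun m hm1 hm2 => by
        simp only [hf]
        have hm : m = Ab k := by omega
        subst hm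
        rw [w_spikeA hk, show w (Ab k + h) = 1/2 - 2*(k:ℝ) from w_left hk (by omega) (by omega)]),
    sum_Ioc_const f (Ab k) (Ab k - h - 1) ((1/2 - 2*(k:ℝ)) * (1/2))
      (fun m hm1 hm2 => by
        simp only [hf]
        rw [show w m = 1/2 from w_mid hk (by omega) (by omega),
          show w (m + h) = 1/2 - 2*(k:ℝ) from w_left hk (by omega) (by omega)]),
    sum_Ioc_const f (Ab k - h - 1) (Ab k - h) ((1/2 + (k:ℝ)) * (1/2))
      (fun m hm1 hm2 => by
        simp only [hf]
        have hm : m = Ab k - h := by omega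
        subst hm
        rw [show Ab k - h + h = Ab k by ring, w_spikeA hk,
          show w (Ab k - h) = 1/2 from w_mid hk (by omega) (by omega)]),
    sum_Ioc_const f (Ab k - h) (Bb k - 1) ((1/2) * (1/2 : ℝ))
      (fun m hm1 hm2 => by
        simp only [hf]
        rw [show w m = 1/2 from w_mid hk (by omega) (by omega),
          show w (m + h) = 1/2 from w_mid hk (by omega) (by omega)]),
    sum_Ioc_const f (Bb k - 1) (Bb k) ((1/2) * (1/2 + (k:ℝ)))
      (fun m hm1 hm2 => by
        simp only [hf]
        have hm : m = Bb k := by omega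
        subst hm
        rw [w_spikeB hk, show w (Bb k + h) = 1/2 from w_mid hk (by omega) (by omega)])]
  rw [show Ab k - (Ab k - 1) = 1 by omega,
    show Ab k - h - 1 - Ab k = -h - 1 by omega,
    show Ab k - h - (Ab k - h - 1) = 1 by omega,
    show Bb k - 1 - (Ab k - h) = 8*(k:ℤ)^2 - 2 + h by omega,
    show Bb k - (Bb k - 1) = 1 by omega,
    toNat_cast (by omega : (0:ℤ) ≤ -h - 1),
    toNat_cast (by omega : (0:ℤ) ≤ 8*(k:ℤ)^2 - 2 + h)]
  push_cast
  ring

end VdCCex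
namespace VdCCex
open Finset Filter

noncomputable def u (m : ℤ) : ℂ := ((w m : ℝ) : ℂ)

noncomputable def F (n : ℕ) : Finset ℤ := Finset.Icc (Ab (n+2)) (Bb (n+2))

lemma cardF (n : ℕ) : (((F n).card : ℕ) : ℝ) = 8*((n:ℝ)+2)^2 := by
  obtain ⟨h1, h2, h3⟩ := kfacts (n+2) (by omega)
  unfold F
  rw [Int.card_Icc, show Bb (n+2) + 1 - Ab (n+2) = 8*(((n+2:ℕ)):ℤ)^2 by omega,
    toNat_cast (by positivity)]
  push_cast
  ring

lemma cardC (n : ℕ) : (((F n).card : ℕ) : ℂ) = ((8*((n:ℝ)+2)^2 : ℝ) : ℂ) := by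
  rw [← Complex.ofReal_natCast, cardF]

lemma tendsto_div_aux (c : ℝ) (d : ℕ → ℝ) (hd : Tendsto d atTop atTop) :
    Tendsto (fun n => c / d n) atTop (nhds 0) :=
  Tendsto.div_atTop tendsto_const_nhds hd

lemma tendsto_shift : Tendsto (fun n : ℕ => ((n:ℝ)+2)) atTop atTop :=
  tendsto_atTop_add_const_right _ 2 tendsto_natCast_atTop_atTop

lemma tendsto_sq : Tendsto (fun n : ℕ => 8*((n:ℝ)+2)^2) atTop atTop := by
  apply tendsto_atTop_mono (fun n => ?_) tendsto_natCast_atTop_atTop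
  have : (0:ℝ) ≤ (n:ℝ) := Nat.cast_nonneg n
  nlinarith

lemma symm_bound (a b g : ℤ) :
    ((Finset.Icc a b) ∆ ((Finset.Icc a b).image (fun m => m + g))).card ≤ 2 * g.natAbs := by
  have himg : (Finset.Icc a b).image (fun m => m + g) = Finset.Icc (a+g) (b+g) :=
    Finset.image_add_right_Icc a b g
  rw [himg]
  have hsub : (Finset.Icc a b) ∆ (Finset.Icc (a+g) (b+g)) ⊆
      (Finset.Ico a (a+g) ∪ Finset.Ioc (b+g) b) ∪ (Finset.Ico (a+g) a ∪ Finset.Ioc b (b+g)) := by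
    intro x hx
    simp only [Finset.mem_symmDiff, Finset.mem_union, Finset.mem_Icc, Finset.mem_Ico,
      Finset.mem_Ioc] at hx ⊢
    omega
  have h1 := Finset.card_le_card hsub
  have h2 := Finset.card_union_le (Finset.Ico a (a+g) ∪ Finset.Ioc (b+g) b)
    (Finset.Ico (a+g) a ∪ Finset.Ioc b (b+g))
  have h3 := Finset.card_union_le (Finset.Ico a (a+g)) (Finset.Ioc (b+g) b)
  have h4 := Finset.card_union_le (Finset.Ico (a+g) a) (Finset.Ioc b (b+g))
  rw [Int.card_Ico, Int.card_Ioc] at h3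
  rw [Int.card_Ico, Int.card_Ioc] at h4
  omega

/-- The real-averages limit. -/
lemma main_real : Tendsto
    (fun n : ℕ => (4*((n:ℝ)+2)^2 + 2*((n:ℝ)+2)) / (8*((n:ℝ)+2)^2)) atTop (nhds (1/2)) := by
  have he : ∀ n : ℕ, (4*((n:ℝ)+2)^2 + 2*((n:ℝ)+2)) / (8*((n:ℝ)+2)^2)
      = 1/2 + (1/4) / ((n:ℝ)+2) := by
    intro n
    have hpos : (0:ℝ) < (n:ℝ)+2 := by positivity
    field_simp
    ring
  have := (tendsto_const_nhds (x := (1/2:ℝ)) (f := atTop)).add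
    (tendsto_div_aux (1/4) _ tendsto_shift)
  simp only [add_zero] at this
  exact this.congr (fun n => (he n).symm)

end VdCCex


open VdCCex in
/-- There is a Følner sequence `(F_n)` in `ℤ` and a sequence `(u_m)` of complex numbers
whose averages of `|u|²` and of `u` along `(F_n)` both tend to `1/2`, while all nonzero
autocorrelation averages tend to `0`. -/
theorem exists_folner_counterexample :
    ∃ (F : ℕ → Finset ℤ) (u : ℤ → ℂ),
      (∀ n, (F n).Nonempty) ∧
      -- `(F n)` is a Følner sequence in `ℤ`
      (∀ g : ℤ, Tendsto
        (fun n => (((F n) ∆ ((F n).image (fun m => m + g))).card : ℝ) / ((F n).card : ℝ))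
        atTop (nhds 0)) ∧
      Tendsto (fun n => (∑ m ∈ F n, ‖u m‖ ^ 2) / ((F n).card : ℝ))
        atTop (nhds (1 / 2)) ∧
      Tendsto (fun n => (∑ m ∈ F n, u m) / ((F n).card : ℂ))
        atTop (nhds ((1 : ℂ) / 2)) ∧
      (∀ h : ℤ, h ≠ 0 →
        Tendsto (fun n => (∑ m ∈ F n, u (m + h) * (starRingEnd ℂ) (u m)) / ((F n).card : ℂ))
          atTop (nhds 0)) := by
  refine ⟨F, u, ?ne, ?fol, ?sq, ?avg, ?corr⟩
  case ne =>
    intro n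
    obtain ⟨h1, h2, h3⟩ := kfacts (n+2) (by omega)
    exact Finset.nonempty_Icc.2 (by omega)
  case fol =>
    intro g
    have hb : Tendsto (fun n : ℕ => (2 * (g.natAbs : ℝ)) / (8*((n:ℝ)+2)^2)) atTop (nhds 0) :=
      tendsto_div_aux _ _ tendsto_sq
    refine squeeze_zero (fun n => by positivity) (fun n => ?_) hb
    rw [show ((F n).card : ℝ) = 8*((n:ℝ)+2)^2 from cardF n]
    have hcard : (((F n ∆ ((F n).image (fun m => m + g))).card : ℕ) : ℝ) ≤ 2 * (g.natAbs : ℝ) := by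
      exact_mod_cast symm_bound (Ab (n+2)) (Bb (n+2)) g
    have hpos : (0:ℝ) < 8*((n:ℝ)+2)^2 := by positivity
    exact (div_le_div_iff_of_pos_right hpos).2 hcard
  case sq =>
    have key : ∀ n : ℕ, (∑ m ∈ F n, ‖u m‖ ^ 2) = 4*((n:ℝ)+2)^2 + 2*((n:ℝ)+2) := by
      intro n
      have : (∑ m ∈ F n, ‖u m‖ ^ 2) = ∑ m ∈ F n, (w m)^2 := by
        apply Finset.sum_congr rfl
        intro m _
        rw [show u m = ((w m : ℝ) : ℂ) from rfl, Complex.norm_real, Real.norm_eq_abs, sq_abs]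
      rw [this, show F n = Finset.Icc (Ab (n+2)) (Bb (n+2)) from rfl, sum_w_sq (by omega)]
      push_cast
      ring
    exact main_real.congr (fun n => by rw [← key n, ← cardF n])
  case avg =>
    have key : ∀ n : ℕ, (∑ m ∈ F n, u m)
        = (((4*((n:ℝ)+2)^2 + 2*((n:ℝ)+2) : ℝ)) : ℂ) := by
      intro n
      rw [show (∑ m ∈ F n, u m) = ∑ m ∈ F n, ((w m : ℝ) : ℂ) from rfl, ← Complex.ofReal_sum,
        show F n = Finset.Icc (Ab (n+2)) (Bb (n+2)) from rfl, sum_w (by omega)]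
      push_cast
      ring
    have hof : Tendsto (fun n : ℕ =>
        ((((4*((n:ℝ)+2)^2 + 2*((n:ℝ)+2)) / (8*((n:ℝ)+2)^2) : ℝ)) : ℂ)) atTop
        (nhds (((1/2 : ℝ)) : ℂ)) := (Complex.continuous_ofReal.tendsto _).comp main_real
    have hhalf : (((1/2 : ℝ)) : ℂ) = (1:ℂ)/2 := by norm_num
    rw [hhalf] at hof
    exact hof.congr (fun n => by rw [Complex.ofReal_div, ← key n, ← cardC n])
  case corr =>
    intro h hne
    have g5 : Tendsto (fun n : ℕ =>
        ((3/2 - |(h:ℝ)|) * ((n:ℝ)+2)) / (8*((n:ℝ)+2)^2)) atTop (nhds 0) := by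
      have he : ∀ n : ℕ, ((3/2 - |(h:ℝ)|) * ((n:ℝ)+2)) / (8*((n:ℝ)+2)^2)
          = ((3/2 - |(h:ℝ)|)/8) / ((n:ℝ)+2) := by
        intro n
        have hpos : (0:ℝ) < (n:ℝ)+2 := by positivity
        field_simp
      exact (tendsto_div_aux _ _ tendsto_shift).congr (fun n => (he n).symm)
    have hof : Tendsto (fun n : ℕ =>
        (((((3/2 - |(h:ℝ)|) * ((n:ℝ)+2)) / (8*((n:ℝ)+2)^2) : ℝ)) : ℂ)) atTop (nhds 0) := by
      rw [show (0 : ℂ) = (((0:ℝ)) : ℂ) by norm_num]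
      exact (Complex.continuous_ofReal.tendsto 0).comp g5
    apply hof.congr'
    filter_upwards [eventually_ge_atTop h.natAbs] with n hn
    have hk : 2 ≤ n + 2 := by omega
    have hsum : ∀ m ∈ F n, u (m + h) * (starRingEnd ℂ) (u m)
        = ((w (m + h) * w m : ℝ) : ℂ) := by
      intro m _
      rw [show u m = ((w m : ℝ) : ℂ) from rfl, show u (m+h) = ((w (m+h) : ℝ) : ℂ) from rfl,
        Complex.conj_ofReal, Complex.ofReal_mul]
    rw [Finset.sum_congr rfl hsum, ← Complex.ofReal_sum, cardC n, ← Complex.ofReal_div]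
    congr 1
    rcases lt_or_gt_of_ne hne with hneg | hpos
    · rw [show F n = Finset.Icc (Ab (n+2)) (Bb (n+2)) from rfl,
        sum_corr_neg hk (by omega) (by exact_mod_cast (by omega : -((n:ℤ)+2) ≤ h)),
        abs_of_neg (show (h:ℝ) < 0 by exact_mod_cast hneg)]
      push_cast
      ring
    · rw [show F n = Finset.Icc (Ab (n+2)) (Bb (n+2)) from rfl,
        sum_corr_pos hk (by omega) (by exact_mod_cast (by omega : h ≤ (n:ℤ)+2)),
        abs_of_pos (show (0:ℝ) < (h:ℝ) by exact_mod_cast hpos)]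
      push_cast
      ring
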